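/- Let ν_n and ν be right-continuous nonincreasing functions from (0,∞) to [0,∞) with ∫_0^∞ e^{-uv} ν(u) du < ∞ for all v > 0, and suppose the Laplace transforms converge: for every v > 0, ∫_0^∞ e^{-uv} ν_n(u) du → ∫_0^∞ e^{-uv} ν(u) du. If ν is continuous, then ν_n(u) → ν(u) for every u > 0. -/

import Mathlib

open MeasureTheory Real Set Filter

private lemma expIoc {p s : ℝ} (h : p ≤ s) :
    ∫ u in Ioc p s, Real.exp (-u) = Real.exp (-p) - Real.exp (-s) := by
  rw [← intervalIntegral.integral_of_le h, intervalIntegral.integral_comp_neg Real.exp,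
    integral_exp]

private lemma integrable_test {f : ℝ → ℝ}
    (hw : IntegrableOn (fun u => Real.exp (-u) * f u) (Ioi 0))
    {g : ℝ → ℝ} (hg : Continuous g) :
    IntegrableOn (fun u => g (Real.exp (-u)) * (Real.exp (-u) * f u)) (Ioi 0) := by
  obtain ⟨C, hC⟩ := isCompact_Icc (a := (0:ℝ)) (b := 1) |>.exists_bound_of_continuousOn
    hg.continuousOn
  refine (hw.norm.const_mul C).mono' ?_ ?_
  · exact ((hg.comp (continuous_exp.comp continuous_neg)).aestronglyMeasurable).mul
      hw.aestronglyMeasurable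
  · filter_upwards [ae_restrict_mem measurableSet_Ioi] with u hu
    have h1 : Real.exp (-u) ∈ Icc (0:ℝ) 1 := by
      constructor
      · exact (Real.exp_pos _).le
      · rw [← Real.exp_zero]
        exact Real.exp_le_exp.2 (by simp at hu ⊢; linarith)
    calc ‖g (Real.exp (-u)) * (Real.exp (-u) * f u)‖
        = ‖g (Real.exp (-u))‖ * ‖Real.exp (-u) * f u‖ := norm_mul _ _
      _ ≤ C * ‖Real.exp (-u) * f u‖ :=
          mul_le_mul_of_nonneg_right (hC _ h1) (norm_nonneg _)

private lemma poly_cvg (ν : ℝ → ℝ) (νn : ℕ → ℝ → ℝ)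
    (hν_int : ∀ v : ℝ, 0 < v →
      IntegrableOn (fun u => Real.exp (-u * v) * ν u) (Ioi 0))
    (hνn_int : ∀ n, ∀ v : ℝ, 0 < v →
      IntegrableOn (fun u => Real.exp (-u * v) * νn n u) (Ioi 0))
    (hconv : ∀ v : ℝ, 0 < v →
      Tendsto (fun n => ∫ u in Ioi (0:ℝ), Real.exp (-u * v) * νn n u) atTop
        (nhds (∫ u in Ioi (0:ℝ), Real.exp (-u * v) * ν u)))
    (P : Polynomial ℝ) :
    Tendsto (fun n => ∫ u in Ioi (0:ℝ), P.eval (Real.exp (-u)) * (Real.exp (-u) * νn n u)) atTop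
      (nhds (∫ u in Ioi (0:ℝ), P.eval (Real.exp (-u)) * (Real.exp (-u) * ν u))) := by
  have key : ∀ f : ℝ → ℝ,
      (∀ v : ℝ, 0 < v → IntegrableOn (fun u => Real.exp (-u * v) * f u) (Ioi 0)) →
      ∫ u in Ioi (0:ℝ), P.eval (Real.exp (-u)) * (Real.exp (-u) * f u)
        = ∑ k ∈ Finset.range (P.natDegree + 1),
            P.coeff k * ∫ u in Ioi (0:ℝ), Real.exp (-u * ((k:ℝ)+1)) * f u := by
    intro f hf
    have h1 : (fun u => P.eval (Real.exp (-u)) * (Real.exp (-u) * f u))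
        = fun u => ∑ k ∈ Finset.range (P.natDegree + 1),
            P.coeff k * (Real.exp (-u * ((k:ℝ)+1)) * f u) := by
      funext u
      rw [Polynomial.eval_eq_sum_range, Finset.sum_mul]
      refine Finset.sum_congr rfl fun k _ => ?_
      have h2 : Real.exp (-u * ((k:ℝ)+1)) = Real.exp (-u) ^ k * Real.exp (-u) := by
        rw [← Real.exp_nat_mul, ← Real.exp_add]
        congr 1
        push_cast
        ring
      rw [h2]; ring
    rw [h1, integral_finset_sum]
    · refine Finset.sum_congr rfl fun k _ => ?_
      exact integral_const_mul _ _
    · intro k _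
      exact ((hf ((k:ℝ)+1) (by positivity))).const_mul _
  rw [key ν hν_int]
  have h2 : ∀ n, ∫ u in Ioi (0:ℝ), P.eval (Real.exp (-u)) * (Real.exp (-u) * νn n u)
      = ∑ k ∈ Finset.range (P.natDegree + 1),
          P.coeff k * ∫ u in Ioi (0:ℝ), Real.exp (-u * ((k:ℝ)+1)) * νn n u :=
    fun n => key (νn n) (hνn_int n)
  simp only [h2]
  exact tendsto_finset_sum _ fun k _ => (hconv ((k:ℝ)+1) (by positivity)).const_mul _

private lemma test_cvg (ν : ℝ → ℝ) (νn : ℕ → ℝ → ℝ)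
    (hν_nonneg : ∀ u ∈ Ioi (0:ℝ), 0 ≤ ν u)
    (hνn_nonneg : ∀ n, ∀ u ∈ Ioi (0:ℝ), 0 ≤ νn n u)
    (hν_int : ∀ v : ℝ, 0 < v →
      IntegrableOn (fun u => Real.exp (-u * v) * ν u) (Ioi 0))
    (hνn_int : ∀ n, ∀ v : ℝ, 0 < v →
      IntegrableOn (fun u => Real.exp (-u * v) * νn n u) (Ioi 0))
    (hconv : ∀ v : ℝ, 0 < v →
      Tendsto (fun n => ∫ u in Ioi (0:ℝ), Real.exp (-u * v) * νn n u) atTop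
        (nhds (∫ u in Ioi (0:ℝ), Real.exp (-u * v) * ν u)))
    (g : ℝ → ℝ) (hg : Continuous g) :
    Tendsto (fun n => ∫ u in Ioi (0:ℝ), g (Real.exp (-u)) * (Real.exp (-u) * νn n u)) atTop
      (nhds (∫ u in Ioi (0:ℝ), g (Real.exp (-u)) * (Real.exp (-u) * ν u))) := by
  have hwn : ∀ n, IntegrableOn (fun u => Real.exp (-u) * νn n u) (Ioi 0) := fun n => by
    simpa using hνn_int n 1 one_pos
  have hwv : IntegrableOn (fun u => Real.exp (-u) * ν u) (Ioi 0) := by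
    simpa using hν_int 1 one_pos
  have hM : Tendsto (fun n => ∫ u in Ioi (0:ℝ), Real.exp (-u) * νn n u) atTop
      (nhds (∫ u in Ioi (0:ℝ), Real.exp (-u) * ν u)) := by
    simpa using hconv 1 one_pos
  obtain ⟨C₀, hC₀⟩ := hM.bddAbove_range
  set M := ∫ u in Ioi (0:ℝ), Real.exp (-u) * ν u with hMdef
  have hM0 : 0 ≤ M := setIntegral_nonneg measurableSet_Ioi
    (fun u hu => mul_nonneg (Real.exp_pos _).le (hν_nonneg u hu))
  set C : ℝ := max C₀ M + 1 with hCdef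
  have hCpos : 0 < C := by
    have := le_max_right C₀ M
    simp only [hCdef]; linarith
  have hMn : ∀ n, ∫ u in Ioi (0:ℝ), Real.exp (-u) * νn n u ≤ C := by
    intro n
    have := hC₀ (mem_range_self n)
    have h2 := le_max_left C₀ M
    simp only [hCdef]
    calc (∫ u in Ioi (0:ℝ), Real.exp (-u) * νn n u) ≤ C₀ := this
      _ ≤ max C₀ M + 1 := by linarith
  have hMC : M ≤ C := by
    have := le_max_right C₀ M
    simp only [hCdef]; linarith
  rw [Metric.tendsto_nhds]
  intro ε hε
  set ε' := ε / (4 * C) with hε'def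
  have hε' : 0 < ε' := by positivity
  obtain ⟨P, hP⟩ := exists_polynomial_near_of_continuousOn 0 1 g hg.continuousOn ε' hε'
  have hpoly := poly_cvg ν νn hν_int hνn_int hconv P
  have key : ∀ (f : ℝ → ℝ), (∀ u ∈ Ioi (0:ℝ), 0 ≤ f u) →
      IntegrableOn (fun u => Real.exp (-u) * f u) (Ioi 0) →
      |(∫ u in Ioi (0:ℝ), g (Real.exp (-u)) * (Real.exp (-u) * f u))
        - ∫ u in Ioi (0:ℝ), P.eval (Real.exp (-u)) * (Real.exp (-u) * f u)|
        ≤ ε' * ∫ u in Ioi (0:ℝ), Real.exp (-u) * f u := by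
    intro f hf0 hwf
    have hint1 := integrable_test hwf hg
    have hint2 := integrable_test hwf P.continuous
    rw [← integral_sub hint1 hint2]
    calc |∫ u in Ioi (0:ℝ), (g (Real.exp (-u)) * (Real.exp (-u) * f u)
            - P.eval (Real.exp (-u)) * (Real.exp (-u) * f u))|
        ≤ ∫ u in Ioi (0:ℝ), |g (Real.exp (-u)) * (Real.exp (-u) * f u)
            - P.eval (Real.exp (-u)) * (Real.exp (-u) * f u)| := by
          simpa [Real.norm_eq_abs] using norm_integral_le_integral_norm
            (μ := volume.restrict (Ioi 0))
            (fun u => g (Real.exp (-u)) * (Real.exp (-u) * f u)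
              - Polynomial.eval (Real.exp (-u)) P * (Real.exp (-u) * f u))
      _ ≤ ∫ u in Ioi (0:ℝ), ε' * (Real.exp (-u) * f u) := by
          refine integral_mono_ae (hint1.sub hint2).abs ((hwf.const_mul ε')) ?_
          filter_upwards [ae_restrict_mem measurableSet_Ioi] with u hu
          have hu' : (0:ℝ) < u := hu
          have h01 : Real.exp (-u) ∈ Icc (0:ℝ) 1 := by
            constructor
            · exact (Real.exp_pos _).le
            · rw [← Real.exp_zero]; exact Real.exp_le_exp.2 (by linarith)
          have hnn : 0 ≤ Real.exp (-u) * f u :=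
            mul_nonneg (Real.exp_pos _).le (hf0 u hu)
          have heq : |g (Real.exp (-u)) * (Real.exp (-u) * f u)
              - P.eval (Real.exp (-u)) * (Real.exp (-u) * f u)|
              = |g (Real.exp (-u)) - P.eval (Real.exp (-u))| * (Real.exp (-u) * f u) := by
            rw [← sub_mul, abs_mul, abs_of_nonneg hnn]
          rw [heq]
          refine mul_le_mul_of_nonneg_right ?_ hnn
          rw [abs_sub_comm]
          exact (hP _ h01).le
      _ = ε' * ∫ u in Ioi (0:ℝ), Real.exp (-u) * f u := integral_const_mul _ _
  have hPc := (Metric.tendsto_nhds.1 hpoly) (ε/2) (by positivity)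
  filter_upwards [hPc] with n hn
  have k1 := key (νn n) (hνn_nonneg n) (hwn n)
  have k2 := key ν hν_nonneg hwv
  have b1 : ε' * ∫ u in Ioi (0:ℝ), Real.exp (-u) * νn n u ≤ ε' * C :=
    mul_le_mul_of_nonneg_left (hMn n) hε'.le
  have b2 : ε' * M ≤ ε' * C := mul_le_mul_of_nonneg_left hMC hε'.le
  have hC4 : ε' * C = ε / 4 := by
    rw [hε'def]; field_simp
  rw [Real.dist_eq] at hn ⊢
  set A := ∫ u in Ioi (0:ℝ), g (Real.exp (-u)) * (Real.exp (-u) * νn n u)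
  set B := ∫ u in Ioi (0:ℝ), P.eval (Real.exp (-u)) * (Real.exp (-u) * νn n u)
  set Cc := ∫ u in Ioi (0:ℝ), P.eval (Real.exp (-u)) * (Real.exp (-u) * ν u)
  set D := ∫ u in Ioi (0:ℝ), g (Real.exp (-u)) * (Real.exp (-u) * ν u)
  have t1 : |A - D| ≤ |A - B| + |B - Cc| + |Cc - D| := by
    calc |A - D| ≤ |A - Cc| + |Cc - D| := abs_sub_le _ _ _
      _ ≤ (|A - B| + |B - Cc|) + |Cc - D| := by
          have := abs_sub_le A B Cc
          linarith
  have h3 : |Cc - D| ≤ ε / 4 := by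
    rw [abs_sub_comm]
    calc |D - Cc| ≤ ε' * M := k2
      _ ≤ ε' * C := b2
      _ = ε / 4 := hC4
  have h1 : |A - B| ≤ ε / 4 := by
    calc |A - B| ≤ ε' * ∫ u in Ioi (0:ℝ), Real.exp (-u) * νn n u := k1
      _ ≤ ε' * C := b1
      _ = ε / 4 := hC4
  linarith

private lemma avg_upper {f : ℝ → ℝ} (hmono : AntitoneOn f (Ioi 0))
    (hw : IntegrableOn (fun u => Real.exp (-u) * f u) (Ioi 0))
    {p s : ℝ} (hp : 0 < p) (hps : p ≤ s) :
    ∫ u in Ioc p s, Real.exp (-u) * f u ≤ f p * (Real.exp (-p) - Real.exp (-s)) := by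
  have hsub : Ioc p s ⊆ Ioi 0 := fun u hu => lt_trans hp hu.1
  have h1 : ∫ u in Ioc p s, Real.exp (-u) * f u ≤ ∫ u in Ioc p s, Real.exp (-u) * f p := by
    refine setIntegral_mono_on (hw.mono_set hsub) ?_ measurableSet_Ioc ?_
    · exact ((continuous_exp.comp continuous_neg).integrableOn_Ioc).mul_const _
    · intro u hu
      exact mul_le_mul_of_nonneg_left (hmono (mem_Ioi.2 hp) (hsub hu) hu.1.le)
        (Real.exp_pos _).le
  rw [integral_mul_const, expIoc hps, mul_comm] at h1
  exact h1

private lemma avg_lower {f : ℝ → ℝ} (hmono : AntitoneOn f (Ioi 0))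
    (hw : IntegrableOn (fun u => Real.exp (-u) * f u) (Ioi 0))
    {q r : ℝ} (hq : 0 < q) (hqr : q ≤ r) :
    f r * (Real.exp (-q) - Real.exp (-r)) ≤ ∫ u in Ioc q r, Real.exp (-u) * f u := by
  have hsub : Ioc q r ⊆ Ioi 0 := fun u hu => lt_trans hq hu.1
  have h1 : ∫ u in Ioc q r, Real.exp (-u) * f r ≤ ∫ u in Ioc q r, Real.exp (-u) * f u := by
    refine setIntegral_mono_on ?_ (hw.mono_set hsub) measurableSet_Ioc ?_
    · exact ((continuous_exp.comp continuous_neg).integrableOn_Ioc).mul_const _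
    · intro u hu
      exact mul_le_mul_of_nonneg_left (hmono (hsub hu) (mem_Ioi.2 (lt_of_lt_of_le hq hqr)) hu.2)
        (Real.exp_pos _).le
  rw [integral_mul_const, expIoc hqr, mul_comm] at h1
  exact h1

private lemma sandwich (ν : ℝ → ℝ) (νn : ℕ → ℝ → ℝ)
    (hν_nonneg : ∀ u ∈ Ioi (0:ℝ), 0 ≤ ν u)
    (hνn_nonneg : ∀ n, ∀ u ∈ Ioi (0:ℝ), 0 ≤ νn n u)
    (hν_int : ∀ v : ℝ, 0 < v →
      IntegrableOn (fun u => Real.exp (-u * v) * ν u) (Ioi 0))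
    (hνn_int : ∀ n, ∀ v : ℝ, 0 < v →
      IntegrableOn (fun u => Real.exp (-u * v) * νn n u) (Ioi 0))
    (hconv : ∀ v : ℝ, 0 < v →
      Tendsto (fun n => ∫ u in Ioi (0:ℝ), Real.exp (-u * v) * νn n u) atTop
        (nhds (∫ u in Ioi (0:ℝ), Real.exp (-u * v) * ν u)))
    {p q r s : ℝ} (hp : 0 < p) (hpq : p < q) (hqr : q < r) (hrs : r < s) :
    ∃ H : ℕ → ℝ, ∃ Hlim : ℝ,
      Tendsto H atTop (nhds Hlim) ∧
      (∀ n, ∫ u in Ioc q r, Real.exp (-u) * νn n u ≤ H n) ∧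
      (∀ n, H n ≤ ∫ u in Ioc p s, Real.exp (-u) * νn n u) ∧
      ((∫ u in Ioc q r, Real.exp (-u) * ν u) ≤ Hlim) ∧
      (Hlim ≤ ∫ u in Ioc p s, Real.exp (-u) * ν u) := by
  have hBB : Real.exp (-s) < Real.exp (-r) := Real.exp_lt_exp.2 (by linarith)
  have hAA : Real.exp (-q) < Real.exp (-p) := Real.exp_lt_exp.2 (by linarith)
  set g : ℝ → ℝ := fun x => max 0 (min 1
    (min ((x - Real.exp (-s)) / (Real.exp (-r) - Real.exp (-s)))
      ((Real.exp (-p) - x) / (Real.exp (-p) - Real.exp (-q))))) with hgdef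
  have hgc : Continuous g := by
    apply continuous_const.max
    apply continuous_const.min
    exact ((continuous_id.sub continuous_const).div_const _).min
      ((continuous_const.sub continuous_id).div_const _)
  have hg0 : ∀ x, 0 ≤ g x := fun x => le_max_left _ _
  have hg1 : ∀ x, g x ≤ 1 := fun x => max_le zero_le_one (min_le_left _ _)
  have hgeq1 : ∀ u : ℝ, q ≤ u → u ≤ r → g (Real.exp (-u)) = 1 := by
    intro u h1 h2
    have e1 : Real.exp (-r) ≤ Real.exp (-u) := Real.exp_le_exp.2 (by linarith)
    have e2 : Real.exp (-u) ≤ Real.exp (-q) := Real.exp_le_exp.2 (by linarith)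
    have m1 : (1:ℝ) ≤ (Real.exp (-u) - Real.exp (-s)) / (Real.exp (-r) - Real.exp (-s)) := by
      rw [le_div_iff₀ (by linarith)]; linarith
    have m2 : (1:ℝ) ≤ (Real.exp (-p) - Real.exp (-u)) / (Real.exp (-p) - Real.exp (-q)) := by
      rw [le_div_iff₀ (by linarith)]; linarith
    simp only [hgdef]
    rw [min_eq_left (le_min m1 m2), max_eq_right zero_le_one]
  have hgeq0 : ∀ u : ℝ, (u ≤ p ∨ s ≤ u) → g (Real.exp (-u)) = 0 := by
    intro u hu
    rcases hu with h | h
    · have e1 : Real.exp (-p) ≤ Real.exp (-u) := Real.exp_le_exp.2 (by linarith)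
      have m2 : (Real.exp (-p) - Real.exp (-u)) / (Real.exp (-p) - Real.exp (-q)) ≤ 0 :=
        div_nonpos_of_nonpos_of_nonneg (by linarith) (by linarith)
      simp only [hgdef]
      exact max_eq_left (le_trans (min_le_right _ _) (le_trans (min_le_right _ _) m2))
    · have e1 : Real.exp (-u) ≤ Real.exp (-s) := Real.exp_le_exp.2 (by linarith)
      have m1 : (Real.exp (-u) - Real.exp (-s)) / (Real.exp (-r) - Real.exp (-s)) ≤ 0 :=
        div_nonpos_of_nonpos_of_nonneg (by linarith) (by linarith)
      simp only [hgdef]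
      exact max_eq_left (le_trans (min_le_right _ _) (le_trans (min_le_left _ _) m1))
  have ineqA : ∀ f : ℝ → ℝ, (∀ u ∈ Ioi (0:ℝ), 0 ≤ f u) →
      IntegrableOn (fun u => Real.exp (-u) * f u) (Ioi 0) →
      ∫ u in Ioc q r, Real.exp (-u) * f u
        ≤ ∫ u in Ioi (0:ℝ), g (Real.exp (-u)) * (Real.exp (-u) * f u) := by
    intro f hf0 hwf
    have h1 : ∫ u in Ioc q r, Real.exp (-u) * f u
        = ∫ u in Ioc q r, g (Real.exp (-u)) * (Real.exp (-u) * f u) := by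
      refine (setIntegral_congr_fun measurableSet_Ioc fun u hu => ?_).symm
      rw [hgeq1 u hu.1.le hu.2, one_mul]
    rw [h1]
    refine setIntegral_mono_set (integrable_test hwf hgc) ?_ ?_
    · filter_upwards [ae_restrict_mem measurableSet_Ioi] with u hu
      exact mul_nonneg (hg0 _) (mul_nonneg (Real.exp_pos _).le (hf0 u hu))
    · exact HasSubset.Subset.eventuallyLE fun u hu => lt_trans hp (lt_trans hpq hu.1)
  have ineqB : ∀ f : ℝ → ℝ, (∀ u ∈ Ioi (0:ℝ), 0 ≤ f u) →
      IntegrableOn (fun u => Real.exp (-u) * f u) (Ioi 0) →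
      (∫ u in Ioi (0:ℝ), g (Real.exp (-u)) * (Real.exp (-u) * f u))
        ≤ ∫ u in Ioc p s, Real.exp (-u) * f u := by
    intro f hf0 hwf
    have hmain : (∫ u in Ioi (0:ℝ), g (Real.exp (-u)) * (Real.exp (-u) * f u))
        ≤ ∫ u in Ioi (0:ℝ), (Ioc p s).indicator (fun u => Real.exp (-u) * f u) u := by
      refine setIntegral_mono_on (integrable_test hwf hgc)
        (hwf.indicator measurableSet_Ioc) measurableSet_Ioi ?_
      intro u hu
      by_cases hmem : u ∈ Ioc p s
      · rw [indicator_of_mem hmem]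
        exact mul_le_of_le_one_left (mul_nonneg (Real.exp_pos _).le (hf0 u hu)) (hg1 _)
      · rw [indicator_of_notMem hmem]
        have h' : u ≤ p ∨ s ≤ u := by
          rw [Set.mem_Ioc] at hmem
          rcases not_and_or.1 hmem with h | h
          · exact Or.inl (le_of_not_gt h)
          · exact Or.inr (not_le.1 h).le
        rw [hgeq0 u h', zero_mul]
    have hsub : Ioc p s ⊆ Ioi 0 := fun u hu => lt_trans hp hu.1
    rwa [integral_indicator measurableSet_Ioc, Measure.restrict_restrict measurableSet_Ioc,
      Set.inter_eq_left.2 hsub] at hmain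
  have hwn : ∀ n, IntegrableOn (fun u => Real.exp (-u) * νn n u) (Ioi 0) := fun n => by
    simpa using hνn_int n 1 one_pos
  have hwv : IntegrableOn (fun u => Real.exp (-u) * ν u) (Ioi 0) := by
    simpa using hν_int 1 one_pos
  exact ⟨fun n => ∫ u in Ioi (0:ℝ), g (Real.exp (-u)) * (Real.exp (-u) * νn n u),
    ∫ u in Ioi (0:ℝ), g (Real.exp (-u)) * (Real.exp (-u) * ν u),
    test_cvg ν νn hν_nonneg hνn_nonneg hν_int hνn_int hconv g hgc,
    fun n => ineqA (νn n) (hνn_nonneg n) (hwn n),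
    fun n => ineqB (νn n) (hνn_nonneg n) (hwn n),
    ineqA ν hν_nonneg hwv,
    ineqB ν hν_nonneg hwv⟩

/-- Feller's extended continuity theorem for Laplace transforms of tails:
if the `ν_n` are nonincreasing right-continuous nonnegative functions on `(0,∞)`
whose Laplace transforms converge to that of a continuous nonincreasing `ν`
(with finite Laplace transform), then `ν_n(u) → ν(u)` for every `u > 0`. -/
theorem feller_continuity_tails (ν : ℝ → ℝ) (νn : ℕ → ℝ → ℝ)
    (hν_mono : AntitoneOn ν (Ioi 0))
    (hν_nonneg : ∀ u ∈ Ioi (0:ℝ), 0 ≤ ν u)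
    (hν_cont : ContinuousOn ν (Ioi 0))
    (hνn_mono : ∀ n, AntitoneOn (νn n) (Ioi 0))
    (hνn_nonneg : ∀ n, ∀ u ∈ Ioi (0:ℝ), 0 ≤ νn n u)
    (hνn_rc : ∀ n, ∀ u ∈ Ioi (0:ℝ), ContinuousWithinAt (νn n) (Ici u) u)
    (hν_int : ∀ v : ℝ, 0 < v →
      IntegrableOn (fun u => Real.exp (-u * v) * ν u) (Ioi 0))
    (hνn_int : ∀ n, ∀ v : ℝ, 0 < v →
      IntegrableOn (fun u => Real.exp (-u * v) * νn n u) (Ioi 0))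
    (hconv : ∀ v : ℝ, 0 < v →
      Tendsto (fun n => ∫ u in Ioi (0:ℝ), Real.exp (-u * v) * νn n u) atTop
        (nhds (∫ u in Ioi (0:ℝ), Real.exp (-u * v) * ν u))) :
    ∀ u : ℝ, 0 < u → Tendsto (fun n => νn n u) atTop (nhds (ν u)) := by
  intro u₀ hu₀
  have hwn : ∀ n, IntegrableOn (fun u => Real.exp (-u) * νn n u) (Ioi 0) := fun n => by
    simpa using hνn_int n 1 one_pos
  have hwv : IntegrableOn (fun u => Real.exp (-u) * ν u) (Ioi 0) := by
    simpa using hν_int 1 one_pos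
  rw [Metric.tendsto_nhds]
  intro ε hε
  -- continuity of ν at u₀ within (0,∞)
  have hev : {v : ℝ | |ν v - ν u₀| < ε/2} ∈ nhdsWithin u₀ (Ioi 0) := by
    have h := (Metric.tendsto_nhds.1 (hν_cont u₀ (mem_Ioi.2 hu₀))) (ε/2) (by positivity)
    have h' : ∀ᶠ x in nhdsWithin u₀ (Ioi 0), |ν x - ν u₀| < ε / 2 := by
      simpa [Real.dist_eq] using h
    exact h'
  obtain ⟨δ₀, hδ₀, hball⟩ := Metric.mem_nhdsWithin_iff.1 hev
  set δ := min (δ₀/2) (u₀/2) with hδdef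
  have hδpos : 0 < δ := lt_min (by positivity) (by positivity)
  have hδu : δ ≤ u₀/2 := min_le_right _ _
  have hδδ₀ : δ < δ₀ := lt_of_le_of_lt (min_le_left _ _) (by linarith)
  have hνbound : ∀ v : ℝ, u₀ - δ ≤ v → v ≤ u₀ + δ → |ν v - ν u₀| < ε/2 := by
    intro v h1 h2
    refine hball ⟨?_, ?_⟩
    · rw [Metric.mem_ball, Real.dist_eq, abs_lt]
      constructor <;> linarith
    · exact mem_Ioi.2 (by linarith)
  -- upper bound
  have hupper : ∀ᶠ n in atTop, νn n u₀ < ν u₀ + ε := by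
    have hq0 : 0 < u₀ - δ/2 := by linarith
    have hc : 0 < Real.exp (-(u₀ - δ/2)) - Real.exp (-u₀) :=
      sub_pos.2 (Real.exp_lt_exp.2 (by linarith))
    set c := Real.exp (-(u₀ - δ/2)) - Real.exp (-u₀) with hcdef
    set F : ℝ → ℝ := fun η =>
      (ν u₀ + ε/2) * (Real.exp (-(u₀ - δ/2 - η)) - Real.exp (-(u₀ + η))) with hFdef
    have hFc : Continuous F := by fun_prop
    have hF0 : F 0 < (ν u₀ + ε) * c := by
      have : F 0 = (ν u₀ + ε/2) * c := by
        simp only [hFdef, sub_zero, add_zero, hcdef]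
      rw [this]
      exact mul_lt_mul_of_pos_right (by linarith) hc
    have h1 : ∀ᶠ η in nhdsWithin (0:ℝ) (Ioi 0), F η < (ν u₀ + ε) * c :=
      (hFc.continuousAt.eventually_lt_const hF0).filter_mono nhdsWithin_le_nhds
    have h2 : Ioo (0:ℝ) (δ/2) ∈ nhdsWithin (0:ℝ) (Ioi 0) :=
      Ioo_mem_nhdsGT_of_mem ⟨le_refl 0, by positivity⟩
    obtain ⟨η, hFη, hη1, hη2⟩ := (h1.and (eventually_of_mem h2 fun x hx => hx)).exists
    obtain ⟨H, Hlim, hH, hHlow, -, -, hHup⟩ :=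
      sandwich ν νn hν_nonneg hνn_nonneg hν_int hνn_int hconv
        (p := u₀ - δ/2 - η) (q := u₀ - δ/2) (r := u₀) (s := u₀ + η)
        (by linarith) (by linarith) (by linarith) (by linarith)
    have hb1 : Hlim < (ν u₀ + ε) * c := by
      have ha := avg_upper hν_mono hwv (p := u₀ - δ/2 - η) (s := u₀ + η)
        (by linarith) (by linarith)
      have hνp : ν (u₀ - δ/2 - η) ≤ ν u₀ + ε/2 := by
        have h := hνbound (u₀ - δ/2 - η) (by linarith) (by linarith)
        have := abs_lt.1 h
        linarith [this.2]
      have hwidth : (0:ℝ) ≤ Real.exp (-(u₀ - δ/2 - η)) - Real.exp (-(u₀ + η)) :=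
        sub_nonneg.2 (Real.exp_le_exp.2 (by linarith))
      calc Hlim ≤ ∫ u in Ioc (u₀ - δ/2 - η) (u₀ + η), Real.exp (-u) * ν u := hHup
        _ ≤ ν (u₀ - δ/2 - η) * (Real.exp (-(u₀ - δ/2 - η)) - Real.exp (-(u₀ + η))) := ha
        _ ≤ (ν u₀ + ε/2) * (Real.exp (-(u₀ - δ/2 - η)) - Real.exp (-(u₀ + η))) :=
            mul_le_mul_of_nonneg_right hνp hwidth
        _ = F η := rfl
        _ < (ν u₀ + ε) * c := hFη
    filter_upwards [hH.eventually_lt_const hb1] with n hn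
    have hlow := avg_lower (hνn_mono n) (hwn n) (q := u₀ - δ/2) (r := u₀) hq0 (by linarith)
    have h5 : νn n u₀ * c ≤ H n := le_trans hlow (hHlow n)
    exact (mul_lt_mul_iff_left₀ hc).1 (lt_of_le_of_lt h5 hn)
  -- lower bound
  have hlower : ∀ᶠ n in atTop, ν u₀ - ε < νn n u₀ := by
    have hc : 0 < Real.exp (-u₀) - Real.exp (-(u₀ + δ/2)) :=
      sub_pos.2 (Real.exp_lt_exp.2 (by linarith))
    set c := Real.exp (-u₀) - Real.exp (-(u₀ + δ/2)) with hcdef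
    set G : ℝ → ℝ := fun η =>
      (ν u₀ - ε/2) * (Real.exp (-(u₀ + η)) - Real.exp (-(u₀ + δ/2 - η))) with hGdef
    have hGc : Continuous G := by fun_prop
    have hG0 : (ν u₀ - ε) * c < G 0 := by
      have : G 0 = (ν u₀ - ε/2) * c := by
        simp only [hGdef, sub_zero, add_zero, hcdef]
      rw [this]
      exact mul_lt_mul_of_pos_right (by linarith) hc
    have h1 : ∀ᶠ η in nhdsWithin (0:ℝ) (Ioi 0), (ν u₀ - ε) * c < G η :=
      (hGc.continuousAt.eventually_const_lt hG0).filter_mono nhdsWithin_le_nhds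
    have h2 : Ioo (0:ℝ) (δ/4) ∈ nhdsWithin (0:ℝ) (Ioi 0) :=
      Ioo_mem_nhdsGT_of_mem ⟨le_refl 0, by positivity⟩
    obtain ⟨η, hGη, hη1, hη2⟩ := (h1.and (eventually_of_mem h2 fun x hx => hx)).exists
    obtain ⟨H, Hlim, hH, -, hHup2, hHlow2, -⟩ :=
      sandwich ν νn hν_nonneg hνn_nonneg hν_int hνn_int hconv
        (p := u₀) (q := u₀ + η) (r := u₀ + δ/2 - η) (s := u₀ + δ/2)
        hu₀ (by linarith) (by linarith) (by linarith)
    have hb2 : (ν u₀ - ε) * c < Hlim := by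
      have hl := avg_lower hν_mono hwv (q := u₀ + η) (r := u₀ + δ/2 - η)
        (by linarith) (by linarith)
      have hνr : ν u₀ - ε/2 ≤ ν (u₀ + δ/2 - η) := by
        have h := hνbound (u₀ + δ/2 - η) (by linarith) (by linarith)
        have := abs_lt.1 h
        linarith [this.1]
      have hwidth : (0:ℝ) ≤ Real.exp (-(u₀ + η)) - Real.exp (-(u₀ + δ/2 - η)) :=
        sub_nonneg.2 (Real.exp_le_exp.2 (by linarith))
      calc (ν u₀ - ε) * c < G η := hGη
        _ = (ν u₀ - ε/2) * (Real.exp (-(u₀ + η)) - Real.exp (-(u₀ + δ/2 - η))) := rfl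
        _ ≤ ν (u₀ + δ/2 - η) * (Real.exp (-(u₀ + η)) - Real.exp (-(u₀ + δ/2 - η))) :=
            mul_le_mul_of_nonneg_right hνr hwidth
        _ ≤ ∫ u in Ioc (u₀ + η) (u₀ + δ/2 - η), Real.exp (-u) * ν u := hl
        _ ≤ Hlim := hHlow2
    filter_upwards [hH.eventually_const_lt hb2] with n hn
    have hup := avg_upper (hνn_mono n) (hwn n) (p := u₀) (s := u₀ + δ/2) hu₀ (by linarith)
    have h5 : H n ≤ νn n u₀ * c := le_trans (hHup2 n) hup
    exact (mul_lt_mul_iff_left₀ hc).1 (lt_of_lt_of_le hn h5)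
  filter_upwards [hupper, hlower] with n h1 h2
  rw [Real.dist_eq, abs_sub_lt_iff]
  constructor <;> linarith
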